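/- A subset U of vertices of a finite directed graph G is a grounding set of G if and only if U is a feedback vertex set of G (i.e., U intersects every directed cycle of G). -/

import Mathlib

private lemma chainA {V : Type*} {E : V → V → Prop} :
    ∀ (l : List V) (a b : V), List.Chain E a (l ++ [b]) →
      ∀ x ∈ l ++ [b], ∃ y ∈ a :: l, E y x := by
  intro l
  induction l with
  | nil =>
    intro a b h x hx
    simp at hx h
    subst hx
    exact ⟨a, by simp, List.isChain_pair.1 h⟩
  | cons w t ih =>
    intro a b h x hx
    rw [List.cons_append] at h
    replace h := List.isChain_cons_cons.1 h
    obtain ⟨haw, hch⟩ := h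
    rw [List.cons_append] at hx
    rcases List.mem_cons.1 hx with rfl | hx'
    · exact ⟨a, by simp, haw⟩
    · obtain ⟨y, hy, hyx⟩ := ih w b hch x hx'
      rcases List.mem_cons.1 hy with rfl | hy'
      · exact ⟨y, by simp, hyx⟩
      · exact ⟨y, by simp [hy'], hyx⟩

private def descList {V : Type*} (g : ℕ → V) (n : ℕ) : ℕ → List V
  | 0 => []
  | (m+1) => g (n+m) :: descList g n m

private lemma descList_split {V : Type*} (g : ℕ → V) :
    ∀ m n, descList g n (m+1) = descList g (n+1) m ++ [g n] := by
  intro m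
  induction m with
  | zero => intro n; simp [descList]
  | succ k ih =>
    intro n
    show g (n + (k+1)) :: descList g n (k+1) = _
    rw [ih n]
    simp [descList, Nat.add_comm, Nat.add_assoc, Nat.add_left_comm]

private lemma descList_chain {V : Type*} {E : V → V → Prop} {g : ℕ → V}
    (hg : ∀ k, E (g (k+1)) (g k)) :
    ∀ m n, List.Chain E (g (n+m+1)) (descList g n (m+1)) := by
  intro m
  induction m with
  | zero =>
    intro n
    show List.Chain E (g (n+1)) [g n]
    exact List.Chain.cons (by simpa using hg n) List.Chain.nil
  | succ k ih =>
    intro n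
    show List.Chain E (g (n+(k+1)+1)) (g (n+(k+1)) :: descList g n (k+1))
    exact List.Chain.cons (hg (n+k+1)) (ih n)

private lemma descList_mem {V : Type*} (g : ℕ → V) :
    ∀ m n x, x ∈ descList g n m → ∃ k, x = g k := by
  intro m
  induction m with
  | zero => intro n x hx; simp [descList] at hx
  | succ k ih =>
    intro n x hx
    rcases List.mem_cons.1 hx with rfl | hx'
    · exact ⟨n + k, rfl⟩
    · exact ih n x hx'

/-- `U` is a grounding set of `G` iff `U` is a feedback vertex set of `G`
(i.e. `U` intersects every directed cycle). -/
theorem grounding_iff_fvs {V : Type*} [Fintype V] (E : V → V → Prop)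
    (R : Set V → Set V)
    (hR : ∀ U, R U = U ∪ {v | ∀ u, E u v → u ∈ U})
    (Rstar : Set V → Set V)
    (hRstar : ∀ U, Rstar U = ⋃ k : ℕ, R^[k] U)
    (U : Set V) :
    Rstar U = Set.univ ↔
      ∀ c : List V, (∃ v l, c = v :: l ∧ List.Chain E v (l ++ [v])) →
        ∃ x ∈ U, x ∈ c := by
  classical
  constructor
  · intro hU c hc
    obtain ⟨v, l, rfl, hch⟩ := hc
    by_contra hcon
    push_neg at hcon
    have pred : ∀ x ∈ v :: l, ∃ y ∈ v :: l, E y x := by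
      intro x hx
      rcases List.mem_cons.1 hx with rfl | hx'
      · exact chainA l x x hch x (by simp)
      · exact chainA l v v hch x (by simp [hx'])
    have key : ∀ n, ∀ x ∈ (v :: l), x ∉ R^[n] U := by
      intro n
      induction n using Nat.strong_induction_on with
      | _ n ih =>
        intro x hx hxR
        cases n with
        | zero =>
          simp only [Function.iterate_zero, id] at hxR
          exact hcon x hxR hx
        | succ m =>
          rw [Function.iterate_succ_apply', hR] at hxR
          rcases hxR with h1 | h2
          · exact ih m (Nat.lt_succ_self m) x hx h1
          · obtain ⟨y, hy, hyx⟩ := pred x hx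
            exact ih m (Nat.lt_succ_self m) y hy (h2 y hyx)
    have hv : v ∈ Rstar U := by rw [hU]; trivial
    rw [hRstar] at hv
    rw [Set.mem_iUnion] at hv
    obtain ⟨k, hk⟩ := hv
    exact key k v (by simp) hk
  · intro hFVS
    have hsub : ∀ W, W ⊆ R W := fun W => by
      rw [hR W]; exact Set.subset_union_left
    have hmono : ∀ a b : ℕ, a ≤ b → R^[a] U ⊆ R^[b] U := by
      have : Monotone (fun n => R^[n] U) := by
        apply monotone_nat_of_le_succ
        intro n
        rw [Function.iterate_succ_apply']
        exact hsub _
      exact fun a b hab => this hab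
    have hiter : ∀ k, R^[k] U ⊆ Rstar U := fun k => by
      rw [hRstar]; exact Set.subset_iUnion (fun k => R^[k] U) k
    by_contra hne
    have hex : ∃ v, v ∉ Rstar U := by
      by_contra h; push_neg at h; exact hne (Set.eq_univ_of_forall h)
    obtain ⟨v₀, hv₀⟩ := hex
    set S := (Rstar U)ᶜ with hSdef
    have hv₀S : v₀ ∈ S := hv₀
    -- every vertex outside R* U has an in-neighbor outside R* U
    have hstep : ∀ w ∈ S, ∃ u, u ∈ S ∧ E u w := by
      intro w hw
      by_contra hcon
      push_neg at hcon
      -- "rank" of every vertex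
      let rk : V → ℕ := fun u =>
        if h : ∃ k, u ∈ R^[k] U then Nat.find h else 0
      set K := (Finset.univ : Finset V).sup rk with hK
      have hpred : ∀ u, E u w → u ∈ R^[K] U := by
        intro u hu
        have huS : u ∉ S := fun hS' => (hcon u hS') hu
        have huR : u ∈ Rstar U := by
          by_contra h'; exact huS h'
        rw [hRstar, Set.mem_iUnion] at huR
        have hex' : ∃ k, u ∈ R^[k] U := huR
        have h1 : u ∈ R^[rk u] U := by
          simp only [rk, dif_pos hex']
          exact Nat.find_spec hex'
        exact hmono (rk u) K (Finset.le_sup (Finset.mem_univ u)) h1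
      have : w ∈ R^[K+1] U := by
        rw [Function.iterate_succ_apply', hR]
        exact Or.inr hpred
      exact hw (hiter (K+1) this)
    -- build an infinite backward walk inside S
    let f : V → V := fun w => if h : w ∈ S then Classical.choose (hstep w h) else w
    let g : ℕ → V := fun n => f^[n] v₀
    have hgS : ∀ n, g n ∈ S := by
      intro n
      induction n with
      | zero => exact hv₀S
      | succ m ihm =>
        have h1 : g (m+1) = f (g m) := Function.iterate_succ_apply' f m v₀
        rw [h1]
        simp only [f, dif_pos ihm]
        exact (Classical.choose_spec (hstep (g m) ihm)).1
    have hgE : ∀ n, E (g (n+1)) (g n) := by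
      intro n
      have h1 : g (n+1) = f (g n) := Function.iterate_succ_apply' f n v₀
      rw [h1]
      simp only [f, dif_pos (hgS n)]
      exact (Classical.choose_spec (hstep (g n) (hgS n))).2
    -- pigeonhole: g repeats
    obtain ⟨i, j, hij, hgij⟩ := Finite.exists_ne_map_eq_of_infinite g
    -- wlog i < j
    wlog hlt : i < j generalizing i j
    · exact this j i hij.symm hgij.symm (hij.lt_or_gt.resolve_left hlt)
    -- extract a cycle
    obtain ⟨m, hm⟩ : ∃ m, j = i + m + 1 := ⟨j - i - 1, by omega⟩
    have hchain : List.Chain E (g j) (descList g (i+1) m ++ [g j]) := by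
      have h1 := descList_chain hgE m i
      rw [descList_split, hgij, ← hm] at h1
      exact h1
    obtain ⟨x, hxU, hxc⟩ := hFVS (g j :: descList g (i+1) m)
      ⟨g j, descList g (i+1) m, rfl, hchain⟩
    have hxS : x ∈ S := by
      rcases List.mem_cons.1 hxc with rfl | hx'
      · exact hgS j
      · obtain ⟨k, rfl⟩ := descList_mem g m (i+1) x hx'
        exact hgS k
    exact hxS (hiter 0 (by simpa using hxU))
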